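/- arXiv:2001.07260 — 2 statements merged into one kernel-verified Lean document; each statement's English description precedes it below -/
import Mathlib

section
/- For a weak composition a of length n with no zero parts, the key polynomial κ_a is quasisymmetric in x_1,...,x_n; in fact every monomial x^{wt(D)} for D a key Kohnert diagram of a has positive exponent on each of x_1,...,x_n. -/
open scoped Classical

/-- A Kohnert move: take the rightmost cell of row `r` and move it down in its
column to the highest open row `r'` below (rows indexed from 1). Cells are `(row, column)`. -/
def KohnertMove (D D' : Finset (ℕ × ℕ)) : Prop :=
  ∃ r c r', (r, c) ∈ D ∧ (∀ c', (r, c') ∈ D → c' ≤ c) ∧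
    1 ≤ r' ∧ r' < r ∧ (r', c) ∉ D ∧ (∀ r'', r' < r'' → r'' < r → (r'', c) ∈ D) ∧
    D' = insert (r', c) (D.erase (r, c))

/-- The largest part of a weak composition. -/
def maxPart (a : List ℕ) : ℕ := a.foldr max 0

/-- Number of cells of a diagram in row `i`. -/
def rowWeight (D : Finset (ℕ × ℕ)) (i : ℕ) : ℕ :=
  (D.filter (fun p => p.1 = i)).card

/-- The weight of a diagram, as a finitely supported function recording the
number of cells in each row. -/
noncomputable def wtF (D : Finset (ℕ × ℕ)) : ℕ →₀ ℕ := ∑ p ∈ D, Finsupp.single p.1 1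

/-- The exponent vector `x^a` of a weak composition `a` (1-based variables). -/
noncomputable def compFinsupp (a : List ℕ) : ℕ →₀ ℕ :=
  ∑ i ∈ Finset.range a.length, Finsupp.single (i + 1) (a.getD i 0)

/-- The key (left-justified) diagram of a weak composition `a`. -/
def keyDiagram (a : List ℕ) : Finset (ℕ × ℕ) :=
  (Finset.Icc 1 a.length ×ˢ Finset.Icc 1 (maxPart a)).filter
    (fun p => p.2 ≤ a.getD (p.1 - 1) 0)

/-- The set of key Kohnert diagrams of `a`: all diagrams obtainable from the key
diagram of `a` by sequences of Kohnert moves. -/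
noncomputable def KDset (a : List ℕ) : Finset (Finset (ℕ × ℕ)) :=
  ((Finset.Icc 1 a.length ×ˢ Finset.Icc 1 (maxPart a)).powerset).filter
    (fun D => Relation.ReflTransGen KohnertMove (keyDiagram a) D)

/-- The key polynomial `κ_a = Σ_{D ∈ KD(a)} x^{wt(D)}`. -/
noncomputable def keyPoly (a : List ℕ) : MvPolynomial ℕ ℤ :=
  ∑ D ∈ KDset a, MvPolynomial.monomial (wtF D) (1 : ℤ)

/-- The ordered sequence of nonzero exponents of a monomial in `x_1, …, x_n`. -/
def nzSeq (n : ℕ) (μ : ℕ →₀ ℕ) : List ℕ :=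
  ((List.range n).map (fun i => μ (i + 1))).filter (fun x => x ≠ 0)

/-- A polynomial is quasisymmetric in `x_1, …, x_n` if the coefficients of any two
monomials (in those variables) agree whenever their ordered sequences of nonzero
exponents agree. -/
def IsQuasisymmetricIn (n : ℕ) (f : MvPolynomial ℕ ℤ) : Prop :=
  ∀ μ ν : ℕ →₀ ℕ, (∀ i ∈ μ.support, i ∈ Finset.Icc 1 n) →
    (∀ i ∈ ν.support, i ∈ Finset.Icc 1 n) →
    nzSeq n μ = nzSeq n ν → MvPolynomial.coeff μ f = MvPolynomial.coeff ν f

private lemma le_maxPart {a : List ℕ} {x : ℕ} (hx : x ∈ a) : x ≤ maxPart a := by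
  induction a with
  | nil => simp at hx
  | cons y t ih =>
    rcases List.mem_cons.mp hx with rfl | hx
    · exact le_max_left _ _
    · exact le_trans (ih hx) (le_max_right _ _)

private lemma col1_mem (a : List ℕ) (h : ∀ x ∈ a, 0 < x) (D : Finset (ℕ × ℕ))
    (hD : Relation.ReflTransGen KohnertMove (keyDiagram a) D) :
    ∀ i, 1 ≤ i → i ≤ a.length → (i, 1) ∈ D := by
  induction hD with
  | refl =>
    intro i h1 h2
    have hi : i - 1 < a.length := by omega
    have hmem : a.getD (i - 1) 0 = a[i - 1] := List.getD_eq_getElem a 0 hi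
    have hin : a[i - 1] ∈ a := List.getElem_mem hi
    have hpos : 0 < a.getD (i - 1) 0 := by rw [hmem]; exact h _ hin
    have hle : a.getD (i - 1) 0 ≤ maxPart a := by rw [hmem]; exact le_maxPart hin
    simp only [keyDiagram, Finset.mem_filter, Finset.mem_product, Finset.mem_Icc]
    exact ⟨⟨⟨h1, h2⟩, ⟨le_refl 1, le_trans hpos hle⟩⟩, hpos⟩
  | tail _ hmove ih =>
    rename_i D₁ D₂ _
    intro i h1 h2
    obtain ⟨r, c, r', hrc, _, hr'1, hr'r, hnot, _, rfl⟩ := hmove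
    by_cases hc : c = 1
    · subst hc
      by_cases hr' : r' ≤ a.length
      · exact absurd (ih r' hr'1 hr') hnot
      · -- r' > a.length, so i < r' < r; cell (i,1) unaffected
        have : (i, 1) ≠ (r, 1) := by
          intro he
          have : i = r := (Prod.mk.inj he).1
          omega
        exact Finset.mem_insert_of_mem (Finset.mem_erase.mpr ⟨this, ih i h1 h2⟩)
    · have : (i, 1) ≠ (r, c) := by intro he; exact hc ((Prod.mk.injEq _ _ _ _ ▸ he).2.symm)
      exact Finset.mem_insert_of_mem (Finset.mem_erase.mpr ⟨this, ih i h1 h2⟩)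

private lemma wtF_apply (D : Finset (ℕ × ℕ)) (i : ℕ) : wtF D i = rowWeight D i := by
  classical
  rw [wtF, rowWeight, Finsupp.finset_sum_apply]
  rw [Finset.card_eq_sum_ones, Finset.sum_filter]
  apply Finset.sum_congr rfl
  intro p _
  rw [Finsupp.single_apply]

private lemma coeff_keyPoly (a : List ℕ) (μ : ℕ →₀ ℕ)
    (hne : MvPolynomial.coeff μ (keyPoly a) ≠ 0) :
    ∃ D ∈ KDset a, wtF D = μ := by
  classical
  rw [keyPoly, MvPolynomial.coeff_sum] at hne
  obtain ⟨D, hD, hne⟩ := Finset.exists_ne_zero_of_sum_ne_zero hne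
  refine ⟨D, hD, ?_⟩
  rw [MvPolynomial.coeff_monomial] at hne
  by_contra hcon
  simp [hcon] at hne

/-- If `a` has no zero parts then `κ_a` is quasisymmetric in `x_1, …, x_n`; in
fact every key Kohnert diagram of `a` has a cell in each of the rows `1, …, n`. -/
theorem key_quasisymmetric_of_no_zero_parts (a : List ℕ)
    (h : ∀ x ∈ a, 0 < x) :
    IsQuasisymmetricIn a.length (keyPoly a) ∧
      ∀ D ∈ KDset a, ∀ i ∈ Finset.Icc 1 a.length, 0 < rowWeight D i := by
  classical
  set n := a.length
  have hrow : ∀ D ∈ KDset a, ∀ i ∈ Finset.Icc 1 n, 0 < rowWeight D i := by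
    intro D hD i hi
    rw [Finset.mem_Icc] at hi
    have hmem : (i, 1) ∈ D := by
      rw [KDset, Finset.mem_filter] at hD
      exact col1_mem a h D hD.2 i hi.1 hi.2
    rw [rowWeight, Finset.card_pos]
    exact ⟨(i, 1), Finset.mem_filter.mpr ⟨hmem, rfl⟩⟩
  refine ⟨?_, hrow⟩
  -- auxiliary: any μ with nonzero coeff is "full"
  have hfull : ∀ μ : ℕ →₀ ℕ, (∀ i ∈ μ.support, i ∈ Finset.Icc 1 n) →
      MvPolynomial.coeff μ (keyPoly a) ≠ 0 → ∀ i ∈ Finset.Icc 1 n, 0 < μ i := by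
    intro μ _ hne i hi
    obtain ⟨D, hD, rfl⟩ := coeff_keyPoly a μ hne
    rw [wtF_apply]
    exact hrow D hD i hi
  -- main quasisymmetry argument
  have key : ∀ μ ν : ℕ →₀ ℕ, (∀ i ∈ μ.support, i ∈ Finset.Icc 1 n) →
      (∀ i ∈ ν.support, i ∈ Finset.Icc 1 n) →
      nzSeq n μ = nzSeq n ν → MvPolynomial.coeff μ (keyPoly a) ≠ 0 → μ = ν := by
    intro μ ν hμs hνs hseq hne
    have hμfull := hfull μ hμs hne
    have hμpos : ∀ i ∈ List.range n, (decide (μ (i + 1) ≠ 0)) = true := by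
      intro i hi
      rw [List.mem_range] at hi
      have := hμfull (i + 1) (Finset.mem_Icc.mpr ⟨by omega, by omega⟩)
      simp; omega
    have hμseq : nzSeq n μ = (List.range n).map (fun i => μ (i + 1)) := by
      rw [nzSeq, List.filter_eq_self]
      intro x hx
      obtain ⟨i, hi, rfl⟩ := List.mem_map.mp hx
      exact hμpos i hi
    have hlen : (nzSeq n ν).length = n := by
      rw [← hseq, hμseq, List.length_map, List.length_range]
    have hνseq : nzSeq n ν = (List.range n).map (fun i => ν (i + 1)) := by
      rw [nzSeq]
      apply List.filter_sublist.eq_of_length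
      rw [nzSeq] at hlen
      rw [hlen, List.length_map, List.length_range]
    have heq : ∀ i ∈ List.range n, μ (i + 1) = ν (i + 1) := by
      rw [← List.map_inj_left, ← hμseq, ← hνseq]; exact hseq
    ext j
    by_cases hj : j ∈ Finset.Icc 1 n
    · rw [Finset.mem_Icc] at hj
      have := heq (j - 1) (List.mem_range.mpr (by omega))
      have hj1 : j - 1 + 1 = j := by omega
      rwa [hj1] at this
    · have h1 : μ j = 0 := by
        by_contra hc
        exact hj (hμs j (Finsupp.mem_support_iff.mpr hc))
      have h2 : ν j = 0 := by
        by_contra hc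
        exact hj (hνs j (Finsupp.mem_support_iff.mpr hc))
      rw [h1, h2]
  intro μ ν hμs hνs hseq
  by_cases h1 : MvPolynomial.coeff μ (keyPoly a) ≠ 0
  · rw [key μ ν hμs hνs hseq h1]
  · by_cases h2 : MvPolynomial.coeff ν (keyPoly a) ≠ 0
    · rw [key ν μ hνs hμs hseq.symm h2]
    · push_neg at h1 h2
      rw [h1, h2]
end

section
/- If a is a weakly increasing weak composition with an index i such that a_{i+1} > a_i > 0, then the lock polynomial 𝔏_a is not symmetric in x_1,...,x_n: 𝔏_a contains the monomial x^a but does not contain the monomial x^{s_i a}, where s_i a swaps parts a_i and a_{i+1}. -/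
open scoped Classical

/-- A labeled diagram is a finite set of triples `(row, column, label)`. The
underlying diagram forgets the labels. -/
def Tcells (T : Finset (ℕ × ℕ × ℕ)) : Finset (ℕ × ℕ) := T.image (fun t => (t.1, t.2.1))

/-- The weight of a labeled diagram records the number of cells in each row. -/
noncomputable def wtT (T : Finset (ℕ × ℕ × ℕ)) : ℕ →₀ ℕ := ∑ t ∈ T, Finsupp.single t.1 1

/-- Lock Kohnert tableau of content `a`: one label per cell; exactly one `i` in
each column from `max(a) - a_i + 1` through `max(a)`; entries in row `r` are at
least `r` (and labels lie in `1..n`); cells with a fixed label weakly descend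
from left to right; labels strictly decrease down columns. -/
def IsLKTF (a : List ℕ) (T : Finset (ℕ × ℕ × ℕ)) : Prop :=
  (∀ t ∈ T, ∀ t' ∈ T, t.1 = t'.1 → t.2.1 = t'.2.1 → t = t') ∧
  (∀ i ∈ Finset.Icc 1 a.length, ∀ c : ℕ,
      (T.filter (fun t => t.2.1 = c ∧ t.2.2 = i)).card =
        if maxPart a - a.getD (i - 1) 0 < c ∧ c ≤ maxPart a then 1 else 0) ∧
  (∀ t ∈ T, 1 ≤ t.1 ∧ t.1 ≤ t.2.2 ∧ 1 ≤ t.2.2 ∧ t.2.2 ≤ a.length) ∧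
  (∀ t ∈ T, ∀ t' ∈ T, t.2.2 = t'.2.2 → t.2.1 < t'.2.1 → t'.1 ≤ t.1) ∧
  (∀ t ∈ T, ∀ t' ∈ T, t.2.1 = t'.2.1 → t.1 < t'.1 → t.2.2 < t'.2.2)

/-- `flat(a)`: the nonzero parts of `a`, in order. -/
def flatC (a : List ℕ) : List ℕ := a.filter (fun x => x ≠ 0)

/-- The (finite) set of lock Kohnert tableaux of content `a`. -/
noncomputable def LKTset (a : List ℕ) : Finset (Finset (ℕ × ℕ × ℕ)) :=
  ((Finset.Icc 1 a.length ×ˢ Finset.Icc 1 (maxPart a) ×ˢ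
      Finset.Icc 1 a.length).powerset).filter (fun T => IsLKTF a T)

/-- The lock polynomial `𝔏_a = Σ_{T ∈ LKT(a)} x^{wt(T)}`. -/
noncomputable def lockPolyT (a : List ℕ) : MvPolynomial ℕ ℤ :=
  ∑ T ∈ LKTset a, MvPolynomial.monomial (wtT T) (1 : ℤ)

/-- A polynomial is symmetric in `x_1, …, x_n` if it is invariant under every
permutation of the variables `x_1, …, x_n` (fixing all other variables). -/
def IsSymmetricIn (n : ℕ) (f : MvPolynomial ℕ ℤ) : Prop :=
  ∀ σ : Equiv.Perm ℕ, (∀ i, i ∉ Finset.Icc 1 n → σ i = i) →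
    MvPolynomial.rename σ f = f

/-- `s_i a`: the list `a` with its (1-based) parts `a_i` and `a_{i+1}` swapped. -/
def swapParts (a : List ℕ) (i : ℕ) : List ℕ :=
  (a.set (i - 1) (a.getD i 0)).set i (a.getD (i - 1) 0)


lemma getD_le_maxPart (a : List ℕ) (k : ℕ) : a.getD k 0 ≤ maxPart a := by
  induction a generalizing k with
  | nil => simp [maxPart]
  | cons x l ih =>
    cases k with
    | zero => simp [maxPart]
    | succ k =>
      simp only [List.getD_cons_succ, maxPart, List.foldr_cons]
      exact le_trans (ih k) (le_max_right _ _)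

lemma getD_mono (a : List ℕ) (hsort : a.Pairwise (· ≤ ·)) {k l : ℕ} (hkl : k ≤ l)
    (hl : l < a.length) : a.getD k 0 ≤ a.getD l 0 := by
  have hk : k < a.length := lt_of_le_of_lt hkl hl
  rw [a.getD_eq_getElem 0 hk, a.getD_eq_getElem 0 hl]
  rcases eq_or_lt_of_le hkl with h | h
  · subst h; rfl
  · exact List.Pairwise.rel_get_of_lt hsort (by simpa using h)

lemma wtT_apply (T : Finset (ℕ × ℕ × ℕ)) (r : ℕ) :
    wtT T r = (T.filter (fun t => t.1 = r)).card := by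
  rw [wtT, Finset.card_filter]
  rw [Finsupp.finset_sum_apply]
  refine Finset.sum_congr rfl (fun t _ => ?_)
  rw [Finsupp.single_apply]

lemma compFinsupp_apply (a : List ℕ) (r : ℕ) (h1 : 1 ≤ r) (h2 : r ≤ a.length) :
    compFinsupp a r = a.getD (r - 1) 0 := by
  rw [compFinsupp, Finsupp.finset_sum_apply]
  rw [Finset.sum_eq_single (r - 1)]
  · rw [Finsupp.single_apply, if_pos (by omega)]
  · intro b _ hb
    rw [Finsupp.single_apply, if_neg (by omega)]
  · intro h; exact absurd (Finset.mem_range.mpr (by omega)) h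

lemma compFinsupp_apply_out (a : List ℕ) (r : ℕ) (h : r = 0 ∨ a.length < r) :
    compFinsupp a r = 0 := by
  rw [compFinsupp, Finsupp.finset_sum_apply]
  refine Finset.sum_eq_zero (fun b hb => ?_)
  rw [Finsupp.single_apply, if_neg (by simp at hb; omega)]

lemma swapParts_length (a : List ℕ) (i : ℕ) : (swapParts a i).length = a.length := by
  simp [swapParts]

lemma swapParts_getD_left (a : List ℕ) (i : ℕ) (h1 : 1 ≤ i) (h2 : i < a.length) :
    (swapParts a i).getD (i - 1) 0 = a.getD i 0 := by
  rw [swapParts, List.getD_eq_getElem?_getD, List.getElem?_set_ne (by omega),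
    List.getElem?_set_self (by omega)]
  simp

lemma swapParts_getD_right (a : List ℕ) (i : ℕ) (h2 : i < a.length) :
    (swapParts a i).getD i 0 = a.getD (i - 1) 0 := by
  rw [swapParts, List.getD_eq_getElem?_getD, List.getElem?_set_self (by simp only [List.length_set]; omega)]
  simp

lemma swapParts_getD_other (a : List ℕ) (i : ℕ) (k : ℕ) (hk1 : k ≠ i - 1) (hk2 : k ≠ i) :
    (swapParts a i).getD k 0 = a.getD k 0 := by
  rw [swapParts, List.getD_eq_getElem?_getD, List.getElem?_set_ne (by omega),
    List.getElem?_set_ne (by omega), List.getD_eq_getElem?_getD]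

lemma filter_ge_card {α : Type*} [DecidableEq α] (T : Finset α) (f : α → ℕ) (n k : ℕ)
    (h : ∀ t ∈ T, f t ≤ n) :
    (T.filter (fun t => k ≤ f t)).card = ∑ r ∈ Finset.Icc k n, (T.filter (fun t => f t = r)).card := by
  classical
  rw [← Finset.card_biUnion]
  · congr 1
    ext t
    simp only [Finset.mem_biUnion, Finset.mem_filter, Finset.mem_Icc]
    constructor
    · rintro ⟨ht, hk⟩; exact ⟨f t, ⟨hk, h t ht⟩, ht, rfl⟩
    · rintro ⟨r, ⟨hk, _⟩, ht, rfl⟩; exact ⟨ht, hk⟩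
  · intro x _ y _ hxy
    simp only [Finset.disjoint_left, Finset.mem_filter]
    rintro t ⟨ht, rfl⟩ ⟨_, h2⟩
    exact hxy h2

lemma label_count (a : List ℕ) (T : Finset (ℕ × ℕ × ℕ)) (hT : IsLKTF a T)
    (hcol : ∀ t ∈ T, 1 ≤ t.2.1 ∧ t.2.1 ≤ maxPart a) (j : ℕ)
    (hj : j ∈ Finset.Icc 1 a.length) :
    (T.filter (fun t => t.2.2 = j)).card = a.getD (j - 1) 0 := by
  classical
  have key := hT.2.1 j hj
  have hsplit : T.filter (fun t => t.2.2 = j)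
      = (Finset.Icc 1 (maxPart a)).biUnion
        (fun c => T.filter (fun t => t.2.1 = c ∧ t.2.2 = j)) := by
    ext t
    simp only [Finset.mem_biUnion, Finset.mem_filter, Finset.mem_Icc]
    constructor
    · rintro ⟨ht, hl⟩; exact ⟨t.2.1, hcol t ht, ht, rfl, hl⟩
    · rintro ⟨c, _, ht, _, hl⟩; exact ⟨ht, hl⟩
  rw [hsplit, Finset.card_biUnion]
  · rw [Finset.sum_congr rfl (fun c _ => key c)]
    have hle : a.getD (j - 1) 0 ≤ maxPart a := getD_le_maxPart a _
    rw [Finset.sum_ite, Finset.sum_const_zero, add_zero, Finset.sum_const, smul_eq_mul, mul_one]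
    have : (Finset.Icc 1 (maxPart a)).filter
        (fun c => maxPart a - a.getD (j - 1) 0 < c ∧ c ≤ maxPart a)
        = Finset.Ioc (maxPart a - a.getD (j - 1) 0) (maxPart a) := by
      ext c
      simp only [Finset.mem_filter, Finset.mem_Icc, Finset.mem_Ioc]
      omega
    rw [this, Nat.card_Ioc]
    omega
  · intro x _ y _ hxy
    simp only [Finset.disjoint_left, Finset.mem_filter]
    rintro t ⟨ht, rfl, _⟩ ⟨_, h2, _⟩
    exact hxy h2

noncomputable def lockT0 (a : List ℕ) : Finset (ℕ × ℕ × ℕ) :=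
  (Finset.Icc 1 a.length ×ˢ Finset.Icc 1 (maxPart a) ×ˢ Finset.Icc 1 a.length).filter
    (fun t => t.2.2 = t.1 ∧ maxPart a - a.getD (t.1 - 1) 0 < t.2.1)

lemma mem_lockT0 (a : List ℕ) (t : ℕ × ℕ × ℕ) :
    t ∈ lockT0 a ↔ t.2.2 = t.1 ∧ 1 ≤ t.1 ∧ t.1 ≤ a.length ∧
      maxPart a - a.getD (t.1 - 1) 0 < t.2.1 ∧ t.2.1 ≤ maxPart a := by
  simp only [lockT0, Finset.mem_filter, Finset.mem_product, Finset.mem_Icc]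
  constructor
  · rintro ⟨⟨h1, h2, h3⟩, h4, h5⟩; exact ⟨h4, h1.1, h1.2, h5, h2.2⟩
  · rintro ⟨h4, ha, hb, h5, hc⟩
    exact ⟨⟨⟨ha, hb⟩, ⟨by omega, hc⟩, by omega⟩, h4, h5⟩

lemma lockT0_isLKTF (a : List ℕ) : IsLKTF a (lockT0 a) := by
  refine ⟨?_, ?_, ?_, ?_, ?_⟩
  · intro t ht t' ht' hr hc
    rw [mem_lockT0] at ht ht'
    have : t.2.2 = t'.2.2 := by rw [ht.1, ht'.1, hr]
    exact Prod.ext hr (Prod.ext hc this)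
  · intro j hj c
    rw [Finset.mem_Icc] at hj
    split_ifs with h
    · rw [Finset.card_eq_one]
      refine ⟨(j, c, j), ?_⟩
      ext t
      simp only [Finset.mem_filter, mem_lockT0, Finset.mem_singleton]
      constructor
      · rintro ⟨⟨hlab, h1, h2, h3, h4⟩, hc, hl⟩
        have : t.1 = j := by rw [← hl, hlab]
        rcases t with ⟨r, cc, l⟩
        simp_all
      · rintro rfl
        exact ⟨⟨rfl, by omega, by omega, by simpa using h.1, h.2⟩, rfl, rfl⟩
    · rw [Finset.card_eq_zero]
      ext t
      simp only [Finset.mem_filter, mem_lockT0, Finset.notMem_empty, iff_false, not_and]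
      rintro ⟨hlab, h1', h2', h3', h4'⟩ hc hl
      have : t.1 = j := by rw [← hl, hlab]
      rw [this] at h3'
      rw [hc] at h3' h4'
      exact h ⟨h3', h4'⟩
  · intro t ht
    rw [mem_lockT0] at ht
    refine ⟨ht.2.1, by omega, by omega, by omega⟩
  · intro t ht t' ht' hlab _
    rw [mem_lockT0] at ht ht'
    omega
  · intro t ht t' ht' hcol hr
    rw [mem_lockT0] at ht ht'
    omega

lemma lockT0_wt (a : List ℕ) : wtT (lockT0 a) = compFinsupp a := by
  ext r
  rw [wtT_apply]
  by_cases hr : 1 ≤ r ∧ r ≤ a.length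
  · rw [compFinsupp_apply a r hr.1 hr.2]
    have himg : (lockT0 a).filter (fun t => t.1 = r)
        = (Finset.Ioc (maxPart a - a.getD (r - 1) 0) (maxPart a)).image
            (fun c => (r, c, r)) := by
      ext t
      simp only [Finset.mem_filter, mem_lockT0, Finset.mem_image, Finset.mem_Ioc]
      constructor
      · rintro ⟨⟨hlab, _, _, h3, h4⟩, hrow⟩
        refine ⟨t.2.1, ⟨by rw [← hrow]; exact h3, h4⟩, ?_⟩
        rcases t with ⟨x, y, z⟩
        simp_all
      · rintro ⟨c, ⟨hc1, hc2⟩, rfl⟩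
        exact ⟨⟨rfl, hr.1, hr.2, hc1, hc2⟩, rfl⟩
    rw [himg, Finset.card_image_of_injective _ (fun x y h => by simpa using h),
      Nat.card_Ioc]
    have := getD_le_maxPart a (r - 1)
    omega
  · rw [compFinsupp_apply_out a r (by omega)]
    rw [Finset.card_eq_zero]
    ext t
    simp only [Finset.mem_filter, mem_lockT0, Finset.notMem_empty, iff_false, not_and]
    rintro ⟨_, ht1, ht2, _, _⟩ hrow
    omega

lemma lockT0_mem_LKTset (a : List ℕ) : lockT0 a ∈ LKTset a := by
  rw [LKTset, Finset.mem_filter, Finset.mem_powerset]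
  exact ⟨Finset.filter_subset _ _, lockT0_isLKTF a⟩

lemma coeff_lockPolyT (a : List ℕ) (m : ℕ →₀ ℕ) :
    MvPolynomial.coeff m (lockPolyT a)
      = (((LKTset a).filter (fun T => wtT T = m)).card : ℤ) := by
  rw [lockPolyT, MvPolynomial.coeff_sum]
  rw [Finset.card_filter]
  push_cast
  refine Finset.sum_congr rfl (fun T _ => ?_)
  rw [MvPolynomial.coeff_monomial]

lemma Icc_insert_bot (k n : ℕ) (h : k ≤ n) :
    Finset.Icc k n = insert k (Finset.Icc (k + 1) n) := by
  ext x
  simp only [Finset.mem_Icc, Finset.mem_insert]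
  omega

lemma sum_Icc_split1 (f : ℕ → ℕ) (k n : ℕ) (h : k ≤ n) :
    ∑ r ∈ Finset.Icc k n, f r = f k + ∑ r ∈ Finset.Icc (k + 1) n, f r := by
  rw [Icc_insert_bot k n h, Finset.sum_insert (by simp only [Finset.mem_Icc]; omega)]

lemma sum_Icc_split2 (f : ℕ → ℕ) (k n : ℕ) (h : k < n) :
    ∑ r ∈ Finset.Icc k n, f r
      = f k + f (k + 1) + ∑ r ∈ Finset.Icc (k + 1 + 1) n, f r := by
  rw [sum_Icc_split1 f k n (by omega), sum_Icc_split1 f (k + 1) n (by omega)]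
  omega


/-- If `a` is weakly increasing with `a_{i+1} > a_i > 0` for some (1-based) `i`,
then `𝔏_a` contains the monomial `x^a` but not the monomial `x^{s_i a}`; in
particular `𝔏_a` is not symmetric in `x_1, …, x_n`. -/
theorem lock_not_symmetric_of_strict_increase (a : List ℕ) (i : ℕ)
    (hsort : a.Pairwise (· ≤ ·)) (h1 : 1 ≤ i) (h2 : i < a.length)
    (h3 : 0 < a.getD (i - 1) 0) (h4 : a.getD (i - 1) 0 < a.getD i 0) :
    MvPolynomial.coeff (compFinsupp a) (lockPolyT a) ≠ 0 ∧
      MvPolynomial.coeff (compFinsupp (swapParts a i)) (lockPolyT a) = 0 ∧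
      ¬ IsSymmetricIn a.length (lockPolyT a) := by
  set n := a.length with hn
  set M := maxPart a with hM
  set b := swapParts a i with hbdef
  have hblen : b.length = n := swapParts_length a i
  have e1 : compFinsupp b i = a.getD i 0 := by
    rw [compFinsupp_apply b i h1 (by omega), swapParts_getD_left a i h1 h2]
  have e2 : compFinsupp b (i + 1) = a.getD (i - 1) 0 := by
    rw [compFinsupp_apply b (i + 1) (by omega) (by omega)]
    have hi : i + 1 - 1 = i := by omega
    rw [hi, swapParts_getD_right a i h2]
  have e3 : ∀ r ∈ Finset.Icc (i + 1 + 1) n, compFinsupp b r = a.getD (r - 1) 0 := by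
    intro r hr
    rw [Finset.mem_Icc] at hr
    rw [compFinsupp_apply b r (by omega) (by omega),
      swapParts_getD_other a i (r - 1) (by omega) (by omega)]
  -- Part 1
  have part1 : MvPolynomial.coeff (compFinsupp a) (lockPolyT a) ≠ 0 := by
    rw [coeff_lockPolyT]
    have hmem : lockT0 a ∈ (LKTset a).filter (fun T => wtT T = compFinsupp a) :=
      Finset.mem_filter.mpr ⟨lockT0_mem_LKTset a, lockT0_wt a⟩
    have hpos := Finset.card_pos.mpr ⟨_, hmem⟩
    exact_mod_cast hpos.ne'
  -- Part 2
  have part2 : MvPolynomial.coeff (compFinsupp b) (lockPolyT a) = 0 := by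
    rw [coeff_lockPolyT]
    norm_cast
    rw [Finset.card_eq_zero, Finset.eq_empty_iff_forall_notMem]
    intro T hT
    rw [Finset.mem_filter] at hT
    obtain ⟨hmem, hwt⟩ := hT
    rw [LKTset, Finset.mem_filter, Finset.mem_powerset] at hmem
    obtain ⟨hsub, hLKT⟩ := hmem
    obtain ⟨hcond1, hcond2, hcond3, hcond4, hcond5⟩ := hLKT
    have hbnd : ∀ t ∈ T, 1 ≤ t.1 ∧ t.1 ≤ n ∧ 1 ≤ t.2.1 ∧ t.2.1 ≤ M ∧ 1 ≤ t.2.2 ∧ t.2.2 ≤ n := by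
      intro t ht
      have := hsub ht
      simp only [Finset.mem_product, Finset.mem_Icc] at this
      tauto
    have hS : ∀ k, (T.filter (fun t => k ≤ t.1)).card
        = ∑ r ∈ Finset.Icc k n, compFinsupp b r := by
      intro k
      rw [filter_ge_card T (fun t => t.1) n k (fun t ht => (hbnd t ht).2.1)]
      exact Finset.sum_congr rfl (fun r _ => by rw [← wtT_apply, hwt])
    have hL : ∀ k, 1 ≤ k → (T.filter (fun t => k ≤ t.2.2)).card
        = ∑ j ∈ Finset.Icc k n, a.getD (j - 1) 0 := by
      intro k hk
      rw [filter_ge_card T (fun t => t.2.2) n k (fun t ht => (hbnd t ht).2.2.2.2.2)]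
      refine Finset.sum_congr rfl (fun j hj => ?_)
      rw [Finset.mem_Icc] at hj
      exact label_count a T ⟨hcond1, hcond2, hcond3, hcond4, hcond5⟩
        (fun t ht => ⟨(hbnd t ht).2.2.1, (hbnd t ht).2.2.2.1⟩) j
        (Finset.mem_Icc.mpr ⟨by omega, hj.2⟩)
    have hsubset : ∀ k, T.filter (fun t => k ≤ t.1) ⊆ T.filter (fun t => k ≤ t.2.2) := by
      intro k t ht
      rw [Finset.mem_filter] at ht ⊢
      exact ⟨ht.1, le_trans ht.2 (hcond3 t ht.1).2.1⟩
    -- cardinalities agree at level i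
    have heqcard : (T.filter (fun t => i ≤ t.1)).card
        = (T.filter (fun t => i ≤ t.2.2)).card := by
      rw [hS i, hL i h1, sum_Icc_split2 _ i n h2, sum_Icc_split2 _ i n h2,
        e1, e2, Finset.sum_congr rfl e3]
      have hi : i + 1 - 1 = i := by omega
      rw [hi]
      omega
    have heq : T.filter (fun t => i ≤ t.1) = T.filter (fun t => i ≤ t.2.2) :=
      Finset.eq_of_subset_of_card_le (hsubset i) (le_of_eq heqcard.symm)
    -- strict inequality at level i+1
    have hlt : (T.filter (fun t => i + 1 ≤ t.1)).card
        < (T.filter (fun t => i + 1 ≤ t.2.2)).card := by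
      rw [hS (i + 1), hL (i + 1) (by omega), sum_Icc_split1 _ (i + 1) n (by omega),
        sum_Icc_split1 _ (i + 1) n (by omega), e2, Finset.sum_congr rfl e3]
      have hi : i + 1 - 1 = i := by omega
      rw [hi]
      omega
    have hss : T.filter (fun t => i + 1 ≤ t.1) ⊂ T.filter (fun t => i + 1 ≤ t.2.2) := by
      rw [Finset.ssubset_iff_subset_ne]
      refine ⟨hsubset (i + 1), fun h => ?_⟩
      rw [h] at hlt
      exact lt_irrefl _ hlt
    obtain ⟨t, htl, htr⟩ := Finset.exists_of_ssubset hss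
    rw [Finset.mem_filter] at htl
    obtain ⟨htT, htlab⟩ := htl
    have htrow : t.1 ≤ i := by
      by_contra hc
      exact htr (Finset.mem_filter.mpr ⟨htT, by omega⟩)
    have htrow' : t.1 = i := by
      have : t ∈ T.filter (fun t => i ≤ t.2.2) := Finset.mem_filter.mpr ⟨htT, by omega⟩
      rw [← heq, Finset.mem_filter] at this
      omega
    -- cell of label i in column M
    have hMpos : 1 ≤ a.getD (i - 1) 0 := h3
    have hMle : a.getD (i - 1) 0 ≤ M := getD_le_maxPart a (i - 1)
    have hsC := hcond2 i (Finset.mem_Icc.mpr ⟨h1, by omega⟩) M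
    rw [if_pos ⟨by omega, le_refl M⟩, Finset.card_eq_one] at hsC
    obtain ⟨s, hsC⟩ := hsC
    have hsmem : s ∈ T.filter (fun t => t.2.1 = M ∧ t.2.2 = i) := by
      rw [hsC]; exact Finset.mem_singleton_self s
    rw [Finset.mem_filter] at hsmem
    obtain ⟨hsT, hscol, hslab⟩ := hsmem
    have hsrow : s.1 = i := by
      have hle : s.1 ≤ i := by
        have := (hcond3 s hsT).2.1
        omega
      have : s ∈ T.filter (fun t => i ≤ t.2.2) := Finset.mem_filter.mpr ⟨hsT, by omega⟩
      rw [← heq, Finset.mem_filter] at this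
      omega
    -- cell of label j := t.2.2 in column M
    have hjle : t.2.2 ≤ n := (hbnd t htT).2.2.2.2.2
    have hjval : 0 < a.getD (t.2.2 - 1) 0 := by
      have := getD_mono a hsort (show i - 1 ≤ t.2.2 - 1 by omega) (show t.2.2 - 1 < n by omega)
      omega
    have hjM : a.getD (t.2.2 - 1) 0 ≤ M := getD_le_maxPart a (t.2.2 - 1)
    have huC := hcond2 t.2.2 (Finset.mem_Icc.mpr ⟨by omega, hjle⟩) M
    rw [if_pos ⟨by omega, le_refl M⟩, Finset.card_eq_one] at huC
    obtain ⟨u, huC⟩ := huC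
    have humem : u ∈ T.filter (fun x => x.2.1 = M ∧ x.2.2 = t.2.2) := by
      rw [huC]; exact Finset.mem_singleton_self u
    rw [Finset.mem_filter] at humem
    obtain ⟨huT, hucol, hulab⟩ := humem
    -- t's column is < M
    have htcolM : t.2.1 < M := by
      rcases lt_or_eq_of_le (hbnd t htT).2.2.2.1 with h | h
      · exact h
      · exfalso
        have := hcond1 t htT s hsT (by omega) (by omega)
        rw [this] at htlab
        omega
    -- u is weakly below t
    have hult : u.1 ≤ t.1 := hcond4 t htT u huT hulab.symm (by omega)
    -- contradiction in column M
    rcases lt_or_eq_of_le (show u.1 ≤ s.1 by omega) with h | h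
    · have := hcond5 u huT s hsT (by omega) h
      omega
    · have := hcond1 u huT s hsT h (by omega)
      rw [this] at hulab
      omega
  -- Part 3
  have part3 : ¬ IsSymmetricIn n (lockPolyT a) := by
    intro hsymm
    set σ : Equiv.Perm ℕ := Equiv.swap i (i + 1) with hσ
    have hfix : ∀ k, k ∉ Finset.Icc 1 n → σ k = k := by
      intro k hk
      rw [Finset.mem_Icc] at hk
      push_neg at hk
      exact Equiv.swap_apply_of_ne_of_ne (by omega) (by omega)
    have hren := hsymm σ hfix
    have hmap : Finsupp.mapDomain σ (compFinsupp a) = compFinsupp b := by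
      ext r
      rw [Finsupp.mapDomain_equiv_apply, Equiv.symm_swap]
      by_cases hri : r = i
      · subst hri
        rw [Equiv.swap_apply_left, e1, compFinsupp_apply a (r + 1) (by omega) (by omega)]
        congr 1
      · by_cases hri' : r = i + 1
        · subst hri'
          rw [Equiv.swap_apply_right, e2, compFinsupp_apply a i h1 (by omega)]
        · rw [Equiv.swap_apply_of_ne_of_ne hri hri']
          by_cases hrange : 1 ≤ r ∧ r ≤ n
          · rw [compFinsupp_apply a r hrange.1 hrange.2,
              compFinsupp_apply b r hrange.1 (by omega),
              swapParts_getD_other a i (r - 1) (by omega) (by omega)]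
          · rw [compFinsupp_apply_out a r (by omega),
              compFinsupp_apply_out b r (by omega)]
    have hco := MvPolynomial.coeff_rename_mapDomain (⇑σ) σ.injective (lockPolyT a)
      (compFinsupp a)
    rw [hren, hmap] at hco
    rw [part2] at hco
    exact part1 hco.symm
  exact ⟨part1, part2, part3⟩
end
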